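/- Let s be a binary sequence of period N with sequence polynomial P_s(x) = \sum_{i=0}^{N-1} s_i x^i ∈ Z[x], and let A be the N×N circulant matrix a_{i,j} = s_{(i-j) mod N}. If gcd(1 - 2^N, det(A)) = 1, then gcd(P_s(2), 2^N - 1) = 1. -/

import Mathlib

open Polynomial Matrix

lemma pow_congr_mod {R : Type*} [Monoid R] {x : R} {N : ℕ} (h : x ^ N = 1)
    {a b : ℕ} (hab : a % N = b % N) : x ^ a = x ^ b := by
  have h1 : x ^ a = x ^ (a % N) := by
    conv_lhs => rw [← Nat.div_add_mod a N, pow_add, pow_mul, h, one_pow, one_mul]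
  have h2 : x ^ b = x ^ (b % N) := by
    conv_lhs => rw [← Nat.div_add_mod b N, pow_add, pow_mul, h, one_pow, one_mul]
  rw [h1, h2, hab]

theorem stmt1 (N : ℕ) [NeZero N] (s : ZMod N → ℤ)
    (hbin : ∀ i, s i = 0 ∨ s i = 1)
    (hgcd : Int.gcd (1 - 2 ^ N) (Matrix.circulant s).det = 1) :
    Int.gcd (∑ i ∈ Finset.range N, s (i : ZMod N) * 2 ^ i) (2 ^ N - 1) = 1 := by
  set P : ℤ := ∑ i ∈ Finset.range N, s (i : ZMod N) * 2 ^ i with hP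
  by_contra hd
  have hNpos : 0 < N := Nat.pos_of_ne_zero (NeZero.ne N)
  have h2N : (1 : ℤ) < 2 ^ N := one_lt_pow₀ (by norm_num) (NeZero.ne N)
  have hdne : Int.gcd P (2 ^ N - 1) ≠ 0 := by
    intro h0
    have := (Int.gcd_eq_zero_iff.mp h0).2
    omega
  set d := Int.gcd P (2 ^ N - 1) with hdd
  have hd1 : d ≠ 1 := hd
  set p := d.minFac with hp
  have hpp : p.Prime := Nat.minFac_prime hd1
  have hpdvd : p ∣ d := Nat.minFac_dvd d
  have hpP : (p : ℤ) ∣ P := (Int.natCast_dvd_natCast.mpr hpdvd).trans (Int.gcd_dvd_left _ _)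
  have hpM : (p : ℤ) ∣ 2 ^ N - 1 := (Int.natCast_dvd_natCast.mpr hpdvd).trans (Int.gcd_dvd_right _ _)
  haveI : Fact p.Prime := ⟨hpp⟩
  -- 2^N = 1 in ZMod p
  have h2 : (2 : ZMod p) ^ N = 1 := by
    have := (ZMod.intCast_zmod_eq_zero_iff_dvd (2 ^ N - 1) p).mpr hpM
    push_cast at this
    linear_combination this
  -- define kernel vector
  set v : ZMod N → ZMod p := fun j => (2 : ZMod p) ^ (-j).val with hv
  have hvne : v ≠ 0 := by
    intro h0
    have h00 : v 0 = 0 := congrFun h0 0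
    simp [hv] at h00
  set s' : ZMod N → ZMod p := fun k => ((s k : ℤ) : ZMod p) with hs'
  have hmul : (Matrix.circulant s').mulVec v = 0 := by
    funext i
    have key : ∀ j : ZMod N, s' (i - j) * v j = s' (i - j) * ((2:ZMod p) ^ (i - j).val * (2:ZMod p) ^ (-i).val) := by
      intro j
      congr 1
      rw [← pow_add]
      refine pow_congr_mod h2 ?_
      have : ((-j).val : ZMod N) = ((i - j).val + (-i).val : ℕ) := by
        push_cast [ZMod.natCast_val, ZMod.cast_id]
        ring
      have := (ZMod.natCast_eq_natCast_iff' _ _ _).mp this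
      simpa using this
    have hsum : (Matrix.circulant s').mulVec v i
        = ∑ j : ZMod N, s' (i - j) * v j := by
      simp [Matrix.mulVec, Matrix.circulant_apply, dotProduct]
    rw [hsum]
    calc ∑ j : ZMod N, s' (i - j) * v j
        = (∑ j : ZMod N, s' (i - j) * (2:ZMod p) ^ (i - j).val) * (2:ZMod p) ^ (-i).val := by
          rw [Finset.sum_mul]
          exact Finset.sum_congr rfl (fun j _ => by rw [key j]; ring)
      _ = (∑ k : ZMod N, s' k * (2:ZMod p) ^ k.val) * (2:ZMod p) ^ (-i).val := by
          congr 1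
          exact Fintype.sum_equiv (Equiv.subLeft i) _ _ (fun j => rfl)
      _ = 0 := by
          have : (∑ k : ZMod N, s' k * (2:ZMod p) ^ k.val) = ((P : ℤ) : ZMod p) := by
            rw [hP]
            push_cast
            refine Finset.sum_nbij' (fun (k : ZMod N) => k.val)
              (fun k => ((k : ℕ) : ZMod N)) ?_ ?_ ?_ ?_ ?_
            · intro a ha; exact Finset.mem_range.mpr (ZMod.val_lt _)
            · intro a ha; exact Finset.mem_univ _
            · intro a ha; simp [ZMod.natCast_val, ZMod.cast_id]
            · intro a ha
              simp [ZMod.val_natCast_of_lt (Finset.mem_range.mp ha)]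
            · intro a ha
              simp [hs', ZMod.natCast_val, ZMod.cast_id]
          rw [this, (ZMod.intCast_zmod_eq_zero_iff_dvd P p).mpr hpP, zero_mul]
  have hdet0 : (Matrix.circulant s').det = 0 := by
    rw [← Matrix.exists_mulVec_eq_zero_iff]
    exact ⟨v, hvne, hmul⟩
  have hcast : ((Matrix.circulant s).det : ZMod p) = (Matrix.circulant s').det := by
    have h1 := RingHom.map_det (Int.castRingHom (ZMod p)) (Matrix.circulant s)
    have h2' : (Int.castRingHom (ZMod p)).mapMatrix (Matrix.circulant s) = Matrix.circulant s' := rfl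
    rw [h2'] at h1
    exact h1
  have hpdet : (p : ℤ) ∣ (Matrix.circulant s).det := by
    rw [← ZMod.intCast_zmod_eq_zero_iff_dvd, hcast, hdet0]
  have hp1N : (p : ℤ) ∣ 1 - 2 ^ N := by
    have : (1 : ℤ) - 2 ^ N = -(2 ^ N - 1) := by ring
    rw [this]; exact hpM.neg_right
  have : (p : ℤ) ∣ Int.gcd (1 - 2 ^ N) (Matrix.circulant s).det := by
    exact_mod_cast Int.dvd_gcd hp1N hpdet
  rw [hgcd] at this
  exact hpp.one_lt.ne' (Nat.eq_one_of_dvd_one (by exact_mod_cast this))
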